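/- Let G be a P5-free graph with a blockade (A_1, …, A_ℓ) and a graph J on vertex set [ℓ] such that for all i < j: if ij ∉ E(J) then A_j is anticomplete to A_i, and if ij ∈ E(J) then A_j is (ε,χ)-dense to A_i with ε ≤ 1/4. Suppose moreover every block A_i is nonempty. Then J is P5-free. -/

import Mathlib

open SimpleGraph

/-- The chromatic number of the subgraph of `G` induced on `S`, as a natural number. -/
noncomputable def chiS {V : Type*} [Fintype V] (G : SimpleGraph V) (S : Set V) : ℕ :=
  (G.induce S).chromaticNumber.toNat

/-- A graph is `P5`-free if it has no induced subgraph isomorphic to the five-vertex path. -/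
def P5Free {V : Type*} (G : SimpleGraph V) : Prop :=
  IsEmpty (SimpleGraph.pathGraph 5 ↪g G)

section Aux

variable {V : Type*} [Fintype V] (G : SimpleGraph V)

lemma chiS_colorable (S : Set V) : (G.induce S).Colorable (chiS G S) := by
  classical
  exact (G.induce S).colorable_chromaticNumber_of_fintype

lemma chiS_le_of_colorable {S : Set V} {n : ℕ} (h : (G.induce S).Colorable n) :
    chiS G S ≤ n :=
  ENat.toNat_le_of_le_coe h.chromaticNumber_le

lemma chiS_pos {S : Set V} (hS : S.Nonempty) : 0 < chiS G S := by
  classical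
  have hne : Nonempty ↥S := hS.to_subtype
  have hft : Fintype ↥S := Fintype.ofFinite _
  have hpos := SimpleGraph.chromaticNumber_pos ((G.induce S).colorable_of_fintype)
  have hle := ((G.induce S).colorable_of_fintype).chromaticNumber_le
  obtain ⟨m, hm, _⟩ := ENat.le_coe_iff.mp hle
  unfold chiS
  rw [hm] at hpos ⊢
  exact_mod_cast hpos

lemma chiS_empty : chiS G (∅ : Set V) = 0 := by
  have : IsEmpty ↥(∅ : Set V) := Set.isEmpty_coe_sort.mpr rfl
  simp [chiS, SimpleGraph.chromaticNumber_eq_zero_of_isEmpty]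

lemma chiS_union_le {S T1 T2 : Set V} (h : S ⊆ T1 ∪ T2) :
    chiS G S ≤ chiS G T1 + chiS G T2 := by
  classical
  obtain ⟨C1⟩ := chiS_colorable G T1
  obtain ⟨C2⟩ := chiS_colorable G T2
  refine chiS_le_of_colorable G ?_
  have hmem : ∀ x : ↥S, (x : V) ∉ T1 → (x : V) ∈ T2 := by
    intro x hx
    rcases h x.2 with h' | h'
    · exact absurd h' hx
    · exact h'
  let C : (G.induce S).Coloring (Fin (chiS G T1) ⊕ Fin (chiS G T2)) :=
    SimpleGraph.Coloring.mk
      (fun x => if hx : (x : V) ∈ T1 then Sum.inl (C1 ⟨x, hx⟩)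
        else Sum.inr (C2 ⟨x, hmem x hx⟩))
      (by
        intro a b hab
        have hGab : G.Adj (a : V) (b : V) := hab
        by_cases ha : (a : V) ∈ T1 <;> by_cases hb : (b : V) ∈ T1 <;>
          simp only [ha, hb, dif_pos, dif_neg, not_false_iff]
        · intro hcon
          have := C1.valid (show (G.induce T1).Adj ⟨a, ha⟩ ⟨b, hb⟩ from hGab)
          exact this (Sum.inl.inj hcon)
        · exact fun hcon => Sum.inl_ne_inr hcon
        · exact fun hcon => Sum.inr_ne_inl hcon
        · intro hcon
          have := C2.valid
            (show (G.induce T2).Adj ⟨a, hmem a ha⟩ ⟨b, hmem b hb⟩ from hGab)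
          exact this (Sum.inr.inj hcon))
  have := C.colorable
  simpa [Fintype.card_sum] using this

lemma exists_avoid {S E1 E2 : Set V} (h : chiS G E1 + chiS G E2 < chiS G S) :
    ∃ v ∈ S, v ∉ E1 ∧ v ∉ E2 := by
  by_contra hcon
  push_neg at hcon
  have hsub : S ⊆ E1 ∪ E2 := by
    intro x hx
    by_cases h1 : x ∈ E1
    · exact Or.inl h1
    · exact Or.inr (hcon x hx h1)
  exact absurd (chiS_union_le G hsub) (not_le.mpr h)

lemma path5_succ {a b : Fin 5} (h : (pathGraph 5).Adj a b) : b = a + 1 ∨ b = a - 1 := by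
  rw [pathGraph_adj] at h
  have ha := a.isLt
  have hb := b.isLt
  rcases h with h | h
  · left; apply Fin.ext; rw [Fin.add_def]; simp; omega
  · right; apply Fin.ext; rw [Fin.sub_def]; simp; omega

end Aux

theorem stmt_16 {V : Type*} [Fintype V] (G : SimpleGraph V) (hP5 : P5Free G)
    (ℓ : ℕ) (A : Fin ℓ → Set V)
    (hne : ∀ i, (A i).Nonempty)
    (hdisj : ∀ i j, i ≠ j → Disjoint (A i) (A j))
    (J : SimpleGraph (Fin ℓ))
    (ε : ℝ) (hε : ε ≤ 1 / 4)
    (hJanti : ∀ i j : Fin ℓ, i < j → ¬ J.Adj i j → ∀ a ∈ A i, ∀ b ∈ A j, ¬ G.Adj a b)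
    (hJdense : ∀ i j : Fin ℓ, i < j → J.Adj i j →
      ∀ v ∈ A j, (chiS G (A i \ G.neighborSet v) : ℝ) < ε * (chiS G (A i) : ℝ)) :
    P5Free J := by
  classical
  constructor
  intro f
  have hf : Function.Injective f := f.injective
  have key : ∀ s : Finset (Fin 5), ∃ v : Fin 5 → V,
      (∀ k ∈ s, v k ∈ A (f k)) ∧
      (∀ a ∈ s, ∀ b ∈ s, (pathGraph 5).Adj a b → f a < f b → G.Adj (v a) (v b)) := by
    intro s
    induction s using Finset.strongInduction with
    | _ s ih =>
      rcases s.eq_empty_or_nonempty with rfl | hs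
      · exact ⟨fun _ => (hne (f 0)).choose, by simp, by simp⟩
      · obtain ⟨k, hk, hmin⟩ := s.exists_min_image (fun q => f q) hs
        obtain ⟨v, hv1, hv2⟩ := ih (s.erase k) (Finset.erase_ssubset hk)
        set i := f k with hi
        have hflt : ∀ q ∈ s.erase k, f k < f q := by
          intro q hq
          have h1 := hmin q (Finset.mem_of_mem_erase hq)
          have h2 : q ≠ k := Finset.ne_of_mem_erase hq
          exact lt_of_le_of_ne h1 fun h => h2 (hf h.symm)
        set E : Fin 5 → Set V := fun q =>
          if q ∈ s.erase k ∧ (pathGraph 5).Adj k q then A i \ G.neighborSet (v q) else ∅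
          with hE_def
        have hE : ∀ q, chiS G (E q) = 0 ∨ (chiS G (E q) : ℝ) < ε * (chiS G (A i) : ℝ) := by
          intro q
          by_cases hq : q ∈ s.erase k ∧ (pathGraph 5).Adj k q
          · right
            have hlt := hflt q hq.1
            have hadj : J.Adj i (f q) := f.map_rel_iff.mpr hq.2
            have hEq : E q = A i \ G.neighborSet (v q) := if_pos hq
            rw [hEq]
            exact hJdense i (f q) hlt hadj (v q) (hv1 q hq.1)
          · left
            have hEq : E q = ∅ := if_neg hq
            rw [hEq, chiS_empty]
        have hχpos : 0 < chiS G (A i) := chiS_pos G (hne i)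
        have hsum : chiS G (E (k + 1)) + chiS G (E (k - 1)) < chiS G (A i) := by
          have hp : (0 : ℝ) < (chiS G (A i) : ℝ) := by exact_mod_cast hχpos
          have h4 : ε * (chiS G (A i) : ℝ) ≤ (chiS G (A i) : ℝ) / 4 := by nlinarith
          have hr : (chiS G (E (k + 1)) : ℝ) + (chiS G (E (k - 1)) : ℝ)
              < (chiS G (A i) : ℝ) := by
            rcases hE (k + 1) with h1 | h1 <;> rcases hE (k - 1) with h2 | h2
            · rw [h1, h2]; push_cast; linarith
            · rw [h1]; push_cast; linarith
            · rw [h2]; push_cast; linarith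
            · linarith
          exact_mod_cast hr
        obtain ⟨w, hwS, hw1, hw2⟩ := exists_avoid G hsum
        refine ⟨Function.update v k w, ?_, ?_⟩
        · intro k' hk'
          by_cases h : k' = k
          · subst h; simpa using hwS
          · rw [Function.update_of_ne h]
            exact hv1 k' (Finset.mem_erase.mpr ⟨h, hk'⟩)
        · intro a ha b hb hadj hlt
          by_cases hak : a = k
          · subst hak
            have hbk : b ≠ a := fun h => by subst h; exact lt_irrefl _ hlt
            have hbe : b ∈ s.erase a := Finset.mem_erase.mpr ⟨hbk, hb⟩
            have hb' : b = a + 1 ∨ b = a - 1 := path5_succ hadj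
            have hmem : w ∈ G.neighborSet (v b) := by
              by_contra hn
              have hwE : w ∈ A i \ G.neighborSet (v b) := ⟨hwS, hn⟩
              rcases hb' with rfl | rfl
              · have hEq : E (a + 1) = A i \ G.neighborSet (v (a + 1)) :=
                  if_pos ⟨hbe, hadj⟩
                exact hw1 (hEq ▸ hwE)
              · have hEq : E (a - 1) = A i \ G.neighborSet (v (a - 1)) :=
                  if_pos ⟨hbe, hadj⟩
                exact hw2 (hEq ▸ hwE)
            rw [Function.update_self, Function.update_of_ne hbk]
            exact (G.adj_symm hmem)
          · by_cases hbk : b = k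
            · subst hbk
              exact absurd hlt
                (not_lt.mpr (le_of_lt (hflt a (Finset.mem_erase.mpr ⟨hak, ha⟩))))
            · rw [Function.update_of_ne hak, Function.update_of_ne hbk]
              exact hv2 a (Finset.mem_erase.mpr ⟨hak, ha⟩)
                b (Finset.mem_erase.mpr ⟨hbk, hb⟩) hadj hlt
  obtain ⟨v, hv1, hv2⟩ := key Finset.univ
  have hvA : ∀ a : Fin 5, v a ∈ A (f a) := fun a => hv1 a (Finset.mem_univ a)
  have hvinj : Function.Injective v := by
    intro a b hab
    by_contra hne'
    have hfa : f a ≠ f b := fun h => hne' (hf h)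
    exact (Set.disjoint_left.mp (hdisj (f a) (f b) hfa) (hvA a)) (hab ▸ hvA b)
  have hadj_iff : ∀ a b : Fin 5, G.Adj (v a) (v b) ↔ (pathGraph 5).Adj a b := by
    intro a b
    constructor
    · intro hG
      by_contra hnadj
      have hab : a ≠ b := fun h => G.irrefl (h ▸ hG)
      have hfab : f a ≠ f b := fun h => hab (hf h)
      have hnJ : ¬ J.Adj (f a) (f b) := fun h => hnadj (f.map_rel_iff.mp h)
      rcases lt_or_gt_of_ne hfab with h | h
      · exact hJanti (f a) (f b) h hnJ (v a) (hvA a) (v b) (hvA b) hG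
      · exact hJanti (f b) (f a) h (fun h' => hnJ h'.symm) (v b) (hvA b) (v a) (hvA a) hG.symm
    · intro hadj
      have hab : a ≠ b := hadj.ne
      have hfab : f a ≠ f b := fun h => hab (hf h)
      rcases lt_or_gt_of_ne hfab with h | h
      · exact hv2 a (Finset.mem_univ a) b (Finset.mem_univ b) hadj h
      · exact (hv2 b (Finset.mem_univ b) a (Finset.mem_univ a) hadj.symm h).symm
  exact hP5.elim ⟨⟨v, hvinj⟩, fun {a b} => hadj_iff a b⟩
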